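/- Let G be a simple graph on n vertices and C(G) its graph code (the F_2-span of the rows of Γ(G) + ω·I_n over F_4). Then every codeword of C(G) has even weight if and only if every vertex of G has odd degree. -/

import Mathlib

noncomputable section

/-- The field with 4 elements. -/
abbrev F4 := GaloisField 2 2

/-- The weight of a vector: the number of nonzero coordinates. -/
def wt {n : ℕ} (x : Fin n → F4) : ℕ := Nat.card {j : Fin n // x j ≠ 0}

open Finset

lemma two_cases : ∀ a : ZMod 2, a = 0 ∨ a = 1 := by decide

lemma indep (ω : F4) (hω : ω ^ 2 + ω + 1 = 0) (a b : ZMod 2)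
    (h : algebraMap (ZMod 2) F4 a + algebraMap (ZMod 2) F4 b * ω = 0) :
    a = 0 ∧ b = 0 := by
  have hch : (1 : F4) + 1 = 0 := CharTwo.add_self_eq_zero 1
  have hω0 : ω ≠ 0 := by
    rintro rfl
    rw [zero_pow (by norm_num), zero_add, zero_add] at hω
    exact one_ne_zero hω
  have hω1 : (1 : F4) + ω ≠ 0 := by
    intro h1
    have hne : ω = 1 := by linear_combination h1 - hch
    rw [hne, one_pow] at hω
    apply one_ne_zero (α := F4)
    linear_combination hω - hch
  rcases two_cases a with rfl | rfl <;> rcases two_cases b with rfl | rfl <;>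
    simp only [map_zero, map_one, zero_add, add_zero, zero_mul, one_mul] at h ⊢
  · exact ⟨trivial, trivial⟩
  · exact absurd h hω0
  · exact absurd h one_ne_zero
  · exact absurd h hω1

lemma sum_sym_zero {n : ℕ} (f : Fin n → Fin n → ZMod 2)
    (hsym : ∀ v j, f v j = f j v) (hd : ∀ v, f v v = 0) :
    ∑ v, ∑ j, f v j = 0 := by
  rw [← Finset.sum_product']
  apply Finset.sum_involution (fun p _ => (p.2, p.1))
  · intro p _; show f p.1 p.2 + f p.2 p.1 = 0
    rw [hsym]; exact CharTwo.add_self_eq_zero _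
  · intro p _ hne heq
    apply hne
    have h2 : p.2 = p.1 := congrArg Prod.fst heq
    rw [← h2]; exact hd _
  · intro p hp; simp
  · intro p _; rfl

lemma wt_formula {n : ℕ} (G : SimpleGraph (Fin n)) [DecidableRel G.Adj]
    (ω : F4) (hω : ω ^ 2 + ω + 1 = 0)
    (M : Fin n → Fin n → F4)
    (hM : ∀ i j, M i j = (if G.Adj i j then 1 else 0) + (if i = j then ω else 0))
    (c : Fin n → ZMod 2) :
    ((wt (∑ v, c v • M v) : ZMod 2)) = ∑ v, c v * (1 + (G.degree v : ZMod 2)) := by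
  classical
  set φ := algebraMap (ZMod 2) F4 with hφ
  set x : Fin n → F4 := ∑ v, c v • M v with hxdef
  set a : Fin n → ZMod 2 := fun j => ∑ v, c v * (if G.Adj v j then 1 else 0) with ha
  have hx : ∀ j, x j = φ (a j) + φ (c j) * ω := by
    intro j
    have h1 : x j = ∑ v, c v • M v j := by
      rw [hxdef]; simp [Finset.sum_apply]
    rw [h1]
    simp only [hM, smul_add]
    rw [Finset.sum_add_distrib]
    congr 1
    · rw [ha]; simp only [map_sum]
      apply Finset.sum_congr rfl
      intro v _
      rw [Algebra.smul_def]
      split_ifs <;> simp [hφ]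
    · simp only [smul_ite, smul_zero]
      rw [Finset.sum_ite_eq' Finset.univ j (fun v => c v • ω)]
      simp [Algebra.smul_def, hφ]
  have hzero : ∀ j, x j = 0 ↔ (a j = 0 ∧ c j = 0) := by
    intro j
    constructor
    · intro h; exact indep ω hω _ _ (by rw [← hx j]; exact h)
    · rintro ⟨h1, h2⟩; rw [hx j, h1, h2]; simp
  have hwt : (wt x : ZMod 2) = ∑ j, if x j ≠ 0 then (1 : ZMod 2) else 0 := by
    have h1 : wt x = (Finset.univ.filter (fun j => x j ≠ 0)).card := by
      rw [wt, Nat.card_eq_fintype_card]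
      exact Fintype.card_subtype _
    rw [h1, Finset.card_filter]
    push_cast
    simp [apply_ite (Nat.cast : ℕ → ZMod 2)]
  rw [hwt]
  have hpt : ∀ j, (if x j ≠ 0 then (1 : ZMod 2) else 0) = a j + c j + a j * c j := by
    intro j
    rcases two_cases (a j) with h1 | h1 <;> rcases two_cases (c j) with h2 | h2 <;>
      rw [h1, h2]
    · rw [if_neg]; · decide
      simp only [ne_eq, not_not]
      exact (hzero j).2 ⟨h1, h2⟩
    all_goals
      rw [if_pos]; · decide
      · intro h
        rcases (hzero j).1 h with ⟨g1, g2⟩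
        rw [h1] at g1; rw [h2] at g2
        simp_all
  simp only [hpt]
  rw [Finset.sum_add_distrib, Finset.sum_add_distrib]
  have e1 : ∑ j, a j = ∑ v, c v * (G.degree v : ZMod 2) := by
    rw [ha]
    rw [Finset.sum_comm]
    apply Finset.sum_congr rfl
    intro v _
    rw [← Finset.mul_sum]
    congr 1
    rw [SimpleGraph.degree, SimpleGraph.neighborFinset_eq_filter, Finset.card_filter]
    push_cast
    simp [apply_ite (Nat.cast : ℕ → ZMod 2)]
  have e2 : ∑ j, a j * c j = 0 := by
    rw [ha]
    simp only [Finset.sum_mul]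
    rw [Finset.sum_comm]
    apply sum_sym_zero (fun v j => c v * (if G.Adj v j then 1 else 0) * c j)
    · intro v j
      rw [if_congr (G.adj_comm v j) rfl rfl]; ring
    · intro v; simp [G.irrefl]
  rw [e1, e2, add_zero]
  rw [← Finset.sum_add_distrib]
  apply Finset.sum_congr rfl
  intro v _
  ring

lemma even_iff_cast (m : ℕ) : Even m ↔ (m : ZMod 2) = 0 := by
  rw [even_iff_two_dvd, ← ZMod.natCast_eq_zero_iff]

lemma odd_iff_cast (m : ℕ) : Odd m ↔ (m : ZMod 2) = 1 := by
  rw [Nat.odd_iff, ← ZMod.natCast_mod m 2]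
  rcases Nat.mod_two_eq_zero_or_one m with h | h <;> rw [h] <;> simp

/-- Every codeword of the graph code `C(G)` (the `F_2`-span of the rows of
`Γ(G) + ω·I_n`) has even weight if and only if every vertex of `G` has odd
degree. -/
theorem graphCode_typeII_iff {n : ℕ} (G : SimpleGraph (Fin n))
    [DecidableRel G.Adj]
    (ω : F4) (hω : ω ^ 2 + ω + 1 = 0)
    (M : Fin n → Fin n → F4)
    (hM : ∀ i j, M i j =
      (if G.Adj i j then 1 else 0) + (if i = j then ω else 0)) :
    (∀ c ∈ Submodule.span (ZMod 2) (Set.range M), Even (wt c)) ↔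
      ∀ v, Odd (G.degree v) := by
  constructor
  · intro h v
    have hmem : M v ∈ Submodule.span (ZMod 2) (Set.range M) :=
      Submodule.subset_span ⟨v, rfl⟩
    have heq : ∑ u, (if u = v then (1 : ZMod 2) else 0) • M u = M v := by
      simp [ite_smul, Finset.sum_ite_eq']
    have hev := h (M v) hmem
    rw [even_iff_cast, ← heq,
      wt_formula G ω hω M hM (fun u => if u = v then 1 else 0)] at hev
    simp only [ite_mul, one_mul, zero_mul, Finset.sum_ite_eq', Finset.mem_univ,
      if_true] at hev
    rw [odd_iff_cast]
    have : (G.degree v : ZMod 2) = 0 ∨ (G.degree v : ZMod 2) = 1 := two_cases _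
    rcases this with h1 | h1
    · rw [h1, add_zero] at hev; exact absurd hev one_ne_zero
    · exact h1
  · intro h c hc
    rw [Submodule.mem_span_range_iff_exists_fun] at hc
    obtain ⟨f, rfl⟩ := hc
    rw [even_iff_cast, wt_formula G ω hω M hM f]
    apply Finset.sum_eq_zero
    intro v _
    rw [(odd_iff_cast _).1 (h v)]
    rw [show (1 : ZMod 2) + 1 = 0 by decide, mul_zero]

end
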